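/- (Cut-elimination under literal removal) Let Γ be a set of clauses over atoms G and X ⊆ G. If Γ ⊢ A by resolution and A ⊄⊆ literals over X, then there exists B ⊆ A \ (literals over X) with Γ⫽X ⊢ B, where Γ⫽X is obtained by deleting all literals over X from each clause of Γ and removing the empty clause if it arises. -/
import Mathlib


/-- A clause over atoms `V`: positive atoms and negated atoms. -/
abbrev Clause (V : Type) := Finset V × Finset V

/-- Resolution derivability from a set of clauses `Γ`:
membership, the axioms `a ∨ ¬a`, and the resolution (cut) rule. -/
inductive Res {V : Type} [DecidableEq V] (Γ : Set (Clause V)) : Clause V → Prop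
  | mem {C : Clause V} : C ∈ Γ → Res Γ C
  | ax (a : V) : Res Γ ({a}, {a})
  | cut {A₁ B₁ A₂ B₂ : Finset V} (a : V) :
      Res Γ (insert a A₁, B₁) → Res Γ (A₂, insert a B₂) → Res Γ (A₁ ∪ A₂, B₁ ∪ B₂)

/-- Satisfaction of a clause by a 3-partition `(t,f,p)` of the atoms. -/
def Sat {V : Type} (t f p : Set V) (C : Clause V) : Prop :=
  (∃ a ∈ C.1, a ∈ t) ∨ (∃ b ∈ C.2, b ∈ f) ∨
    ((∀ a ∈ C.1, a ∈ p) ∧ (∀ b ∈ C.2, b ∈ p) ∧ p.Nonempty)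

lemma stmt15_aux {V : Type} [DecidableEq V] (Γ : Set (Clause V))
    (X : Finset V) (A : Clause V) (hA : Res Γ A) :
    (A.1 ⊆ X ∧ A.2 ⊆ X) ∨ ∃ B : Clause V, B.1 ⊆ A.1 \ X ∧ B.2 ⊆ A.2 \ X ∧
      Res ({D | ∃ C ∈ Γ, D = (C.1 \ X, C.2 \ X) ∧ D ≠ ((∅ : Finset V), (∅ : Finset V))}) B := by
  induction hA with
  | @mem C hC =>
    by_cases hx : C.1 ⊆ X ∧ C.2 ⊆ X
    · exact Or.inl hx
    · refine Or.inr ⟨(C.1 \ X, C.2 \ X), le_refl _, le_refl _, Res.mem ⟨C, hC, rfl, ?_⟩⟩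
      intro h
      rw [Prod.ext_iff] at h
      simp only [Finset.sdiff_eq_empty_iff_subset] at h
      exact hx h
  | ax a =>
    by_cases ha : a ∈ X
    · exact Or.inl ⟨Finset.singleton_subset_iff.mpr ha, Finset.singleton_subset_iff.mpr ha⟩
    · refine Or.inr ⟨({a}, {a}), ?_, ?_, Res.ax a⟩ <;>
        simp [Finset.singleton_subset_iff, Finset.mem_sdiff, ha]
  | @cut A₁ B₁ A₂ B₂ a h1 h2 ih1 ih2 =>
    rcases ih1 with hL1 | ⟨C₁, hC11, hC12, hres1⟩
    · rcases ih2 with hL2 | ⟨C₂, hC21, hC22, hres2⟩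
      · refine Or.inl ⟨?_, ?_⟩
        · exact Finset.union_subset (fun x hx => hL1.1 (Finset.mem_insert_of_mem hx)) hL2.1
        · exact Finset.union_subset hL1.2 (fun x hx => hL2.2 (Finset.mem_insert_of_mem hx))
      · -- left clause inside X, so a ∈ X; hence a ∉ C₂.2
        have haX : a ∈ X := hL1.1 (Finset.mem_insert_self _ _)
        refine Or.inr ⟨C₂, ?_, ?_, hres2⟩
        · exact hC21.trans (Finset.sdiff_subset_sdiff Finset.subset_union_right le_rfl)
        · intro x hx
          have := hC22 hx
          rw [Finset.mem_sdiff] at this ⊢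
          rcases Finset.mem_insert.mp this.1 with rfl | hmem
          · exact absurd haX this.2
          · exact ⟨Finset.mem_union_right _ hmem, this.2⟩
    · by_cases haC1 : a ∈ C₁.1
      · have haX : a ∉ X := (Finset.mem_sdiff.mp (hC11 haC1)).2
        rcases ih2 with hL2 | ⟨C₂, hC21, hC22, hres2⟩
        · exact absurd (hL2.2 (Finset.mem_insert_self _ _)) haX
        · by_cases haC2 : a ∈ C₂.2
          · -- cut on a
            refine Or.inr ⟨(C₁.1.erase a ∪ C₂.1, C₁.2 ∪ C₂.2.erase a), ?_, ?_, ?_⟩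
            · refine Finset.union_subset ?_ ?_
              · intro x hx
                rw [Finset.mem_erase] at hx
                have := Finset.mem_sdiff.mp (hC11 hx.2)
                rcases Finset.mem_insert.mp this.1 with rfl | hmem
                · exact absurd rfl hx.1
                · exact Finset.mem_sdiff.mpr ⟨Finset.mem_union_left _ hmem, this.2⟩
              · exact hC21.trans (Finset.sdiff_subset_sdiff Finset.subset_union_right le_rfl)
            · refine Finset.union_subset ?_ ?_
              · exact hC12.trans (Finset.sdiff_subset_sdiff Finset.subset_union_left le_rfl)
              · intro x hx
                rw [Finset.mem_erase] at hx
                have := Finset.mem_sdiff.mp (hC22 hx.2)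
                rcases Finset.mem_insert.mp this.1 with rfl | hmem
                · exact absurd rfl hx.1
                · exact Finset.mem_sdiff.mpr ⟨Finset.mem_union_right _ hmem, this.2⟩
            · have e1 : C₁ = (insert a (C₁.1.erase a), C₁.2) := by
                rw [Finset.insert_erase haC1]
              have e2 : C₂ = (C₂.1, insert a (C₂.2.erase a)) := by
                rw [Finset.insert_erase haC2]
              exact Res.cut a (e1 ▸ hres1) (e2 ▸ hres2)
          · -- use C₂ directly
            refine Or.inr ⟨C₂, ?_, ?_, hres2⟩
            · exact hC21.trans (Finset.sdiff_subset_sdiff Finset.subset_union_right le_rfl)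
            · intro x hx
              have := Finset.mem_sdiff.mp (hC22 hx)
              rcases Finset.mem_insert.mp this.1 with rfl | hmem
              · exact absurd hx haC2
              · exact Finset.mem_sdiff.mpr ⟨Finset.mem_union_right _ hmem, this.2⟩
      · -- use C₁ directly
        refine Or.inr ⟨C₁, ?_, ?_, hres1⟩
        · intro x hx
          have := Finset.mem_sdiff.mp (hC11 hx)
          rcases Finset.mem_insert.mp this.1 with rfl | hmem
          · exact absurd hx haC1
          · exact Finset.mem_sdiff.mpr ⟨Finset.mem_union_left _ hmem, this.2⟩
        · exact hC12.trans (Finset.sdiff_subset_sdiff Finset.subset_union_left le_rfl)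

theorem stmt15 {V : Type} [DecidableEq V] (Γ : Set (Clause V))
    (X : Finset V) (A : Clause V)
    (hA : Res Γ A) (hnot : ¬ (A.1 ⊆ X ∧ A.2 ⊆ X)) :
    ∃ B : Clause V, B.1 ⊆ A.1 \ X ∧ B.2 ⊆ A.2 \ X ∧
      Res ({D | ∃ C ∈ Γ, D = (C.1 \ X, C.2 \ X) ∧ D ≠ ((∅ : Finset V), (∅ : Finset V))}) B := by
  rcases stmt15_aux Γ X A hA with h | h
  · exact absurd h hnot
  · exact h
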